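/- arXiv:2401.00322 — 2 statements merged into one kernel-verified Lean document; each statement's English description precedes it below -/
import Mathlib

section
/- Let 𝒯 be a backward linear transfer on P(X) × P(X) which is bounded above. Then 𝒯 has bounded oscillations: there is a constant K such that |𝒯_n(μ, ν) − n c(𝒯)| ≤ K for all μ, ν ∈ P(X) and all n ∈ ℕ; consequently 𝒯_n(μ, ν)/n → c(𝒯) uniformly on P(X) × P(X), and for every g ∈ C(X), T^n g(x)/n → −c(𝒯) uniformly in x ∈ X. -/
open MeasureTheory Filter Topology
open scoped ENNReal

/-- The Dirac mass at `x` as a probability measure. -/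
noncomputable def diracP {X : Type*} [MeasurableSpace X] (x : X) :
    MeasureTheory.ProbabilityMeasure X :=
  ⟨MeasureTheory.Measure.dirac x, inferInstance⟩

/-- The `n`-fold inf-convolution iterates of a transfer functional:
`iterT 𝒯 n` is `𝒯_{n+1} = 𝒯 ⋆ ⋯ ⋆ 𝒯` (`n+1` factors). -/
noncomputable def iterT {X : Type*} [MeasurableSpace X]
    (𝒯 : ProbabilityMeasure X → ProbabilityMeasure X → EReal) :
    ℕ → ProbabilityMeasure X → ProbabilityMeasure X → EReal
  | 0 => 𝒯
  | n + 1 => fun μ ν => ⨅ σ : ProbabilityMeasure X, 𝒯 μ σ + iterT 𝒯 n σ ν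

namespace Stmt10Aux

lemma ereal_add_iInf {ι : Sort*} (r : ℝ) (f : ι → EReal) :
    (⨅ i, ((r : EReal) + f i)) = (r : EReal) + ⨅ i, f i := by
  have easy : ∀ (s : ℝ) (g : ι → EReal), (s : EReal) + ⨅ i, g i ≤ ⨅ i, ((s : EReal) + g i) :=
    fun s g => le_iInf fun i => add_le_add le_rfl (iInf_le _ i)
  refine le_antisymm ?_ (easy r f)
  have key : ((-r : ℝ) : EReal) + ⨅ i, ((r : EReal) + f i) ≤ ⨅ i, f i := by
    refine le_trans (easy _ _) (le_of_eq (iInf_congr fun i => ?_))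
    rw [← add_assoc, ← EReal.coe_add, neg_add_cancel, EReal.coe_zero, zero_add]
  calc ⨅ i, ((r : EReal) + f i)
      = (r : EReal) + (((-r : ℝ) : EReal) + ⨅ i, ((r : EReal) + f i)) := by
        rw [← add_assoc, ← EReal.coe_add, add_neg_cancel, EReal.coe_zero, zero_add]
    _ ≤ (r : EReal) + ⨅ i, f i := add_le_add le_rfl key

lemma ereal_iInf_add {ι : Sort*} (r : ℝ) (f : ι → EReal) :
    (⨅ i, (f i + (r : EReal))) = (⨅ i, f i) + r := by
  rw [add_comm (⨅ i, f i) (r : EReal), ← ereal_add_iInf]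
  exact iInf_congr fun i => add_comm _ _

variable {X : Type*} [MeasurableSpace X] (𝒯 : ProbabilityMeasure X → ProbabilityMeasure X → EReal)

lemma iterT_succ (n : ℕ) (μ ν : ProbabilityMeasure X) :
    iterT 𝒯 (n + 1) μ ν = ⨅ σ : ProbabilityMeasure X, 𝒯 μ σ + iterT 𝒯 n σ ν := rfl

variable {M m : ℝ} (hM : ∀ μ ν, 𝒯 μ ν ≤ (M : EReal)) (hm : ∀ μ ν, (m : EReal) ≤ 𝒯 μ ν)

include hM in
lemma iter_le : ∀ (n : ℕ) (μ ν : ProbabilityMeasure X), iterT 𝒯 n μ ν ≤ ((((n : ℝ) + 1) * M : ℝ) : EReal) := by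
  intro n
  induction n with
  | zero => intro μ ν; simpa [iterT] using hM μ ν
  | succ n ih =>
    intro μ ν
    refine (iInf_le _ ν).trans ((add_le_add (hM μ ν) (ih ν ν)).trans (le_of_eq ?_))
    rw [← EReal.coe_add]
    congr 1
    push_cast
    ring

include hm in
lemma le_iter : ∀ (n : ℕ) (μ ν : ProbabilityMeasure X), ((((n : ℝ) + 1) * m : ℝ) : EReal) ≤ iterT 𝒯 n μ ν := by
  intro n
  induction n with
  | zero => intro μ ν; simpa [iterT] using hm μ ν
  | succ n ih =>
    intro μ ν
    refine le_iInf fun σ => le_trans (le_of_eq ?_) (add_le_add (hm μ σ) (ih σ ν))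
    rw [← EReal.coe_add]
    congr 1
    push_cast
    ring

include hM hm in
lemma iter_coe (n : ℕ) (μ ν : ProbabilityMeasure X) :
    (((iterT 𝒯 n μ ν).toReal : ℝ) : EReal) = iterT 𝒯 n μ ν := by
  have hu := iter_le 𝒯 hM n μ ν
  have hl := le_iter 𝒯 hm n μ ν
  exact EReal.coe_toReal (fun h => (EReal.coe_lt_top _).not_ge (h ▸ hu))
    (fun h => (EReal.bot_lt_coe _).not_ge (h ▸ hl))



include hM hm in
lemma iter_assoc : ∀ (n k : ℕ) (μ ν : ProbabilityMeasure X),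
    iterT 𝒯 (n + k + 1) μ ν = ⨅ σ, (iterT 𝒯 n μ σ + iterT 𝒯 k σ ν) := by
  intro n
  induction n with
  | zero =>
    intro k μ ν
    rw [Nat.zero_add, iterT_succ]
    rfl
  | succ n ih =>
    intro k μ ν
    have e1 : n + 1 + k + 1 = (n + k + 1) + 1 := by omega
    rw [e1, iterT_succ]
    have hr : ∀ σ' : ProbabilityMeasure X,
        (((iterT 𝒯 0 μ σ').toReal : ℝ) : EReal) = 𝒯 μ σ' := fun σ' => iter_coe 𝒯 hM hm 0 μ σ'
    have h2 : ∀ σ' : ProbabilityMeasure X, 𝒯 μ σ' + iterT 𝒯 (n + k + 1) σ' ν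
        = ⨅ σ, ((𝒯 μ σ' + iterT 𝒯 n σ' σ) + iterT 𝒯 k σ ν) := by
      intro σ'
      rw [ih k σ' ν, ← hr σ', ← ereal_add_iInf]
      exact iInf_congr fun σ => (add_assoc _ _ _).symm
    calc (⨅ σ', 𝒯 μ σ' + iterT 𝒯 (n + k + 1) σ' ν)
        = ⨅ σ', ⨅ σ, ((𝒯 μ σ' + iterT 𝒯 n σ' σ) + iterT 𝒯 k σ ν) := iInf_congr h2
      _ = ⨅ σ, ⨅ σ', ((𝒯 μ σ' + iterT 𝒯 n σ' σ) + iterT 𝒯 k σ ν) := iInf_comm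
      _ = ⨅ σ, (iterT 𝒯 (n + 1) μ σ + iterT 𝒯 k σ ν) := by
          refine iInf_congr fun σ => ?_
          have hr2 : (((iterT 𝒯 k σ ν).toReal : ℝ) : EReal) = iterT 𝒯 k σ ν :=
            iter_coe 𝒯 hM hm k σ ν
          rw [← hr2, ereal_iInf_add, iterT_succ]

include hM hm in
lemma iter_split (n k : ℕ) (μ ν σ : ProbabilityMeasure X) :
    iterT 𝒯 (n + k + 1) μ ν ≤ iterT 𝒯 n μ σ + iterT 𝒯 k σ ν := by
  rw [iter_assoc 𝒯 hM hm]
  exact iInf_le _ σ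



lemma toReal_bounds {x : EReal} {l u : ℝ} (hl : (l : EReal) ≤ x) (hu : x ≤ (u : EReal)) :
    l ≤ x.toReal ∧ x.toReal ≤ u := by
  constructor
  · have := EReal.toReal_le_toReal hl (EReal.coe_ne_bot l)
      (fun h => (EReal.coe_lt_top u).not_ge (h ▸ hu))
    simpa using this
  · have := EReal.toReal_le_toReal hu
      (fun h => (EReal.bot_lt_coe l).not_ge (h ▸ hl)) (EReal.coe_ne_top u)
    simpa using this

noncomputable def Fr (𝒯 : ProbabilityMeasure X → ProbabilityMeasure X → EReal)
    (n : ℕ) (μ ν : ProbabilityMeasure X) : ℝ := (iterT 𝒯 n μ ν).toReal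

noncomputable def Ar (𝒯 : ProbabilityMeasure X → ProbabilityMeasure X → EReal) (n : ℕ) : ℝ :=
  (⨅ p : ProbabilityMeasure X × ProbabilityMeasure X, iterT 𝒯 n p.1 p.2).toReal

include hM hm

lemma Fr_coe (n : ℕ) (μ ν : ProbabilityMeasure X) :
    ((Fr 𝒯 n μ ν : ℝ) : EReal) = iterT 𝒯 n μ ν := iter_coe 𝒯 hM hm n μ ν

lemma Fr_bounds (n : ℕ) (μ ν : ProbabilityMeasure X) :
    ((n : ℝ) + 1) * m ≤ Fr 𝒯 n μ ν ∧ Fr 𝒯 n μ ν ≤ ((n : ℝ) + 1) * M :=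
  toReal_bounds (le_iter 𝒯 hm n μ ν) (iter_le 𝒯 hM n μ ν)

variable [Nonempty (ProbabilityMeasure X)]

lemma Ar_coe (n : ℕ) :
    ((Ar 𝒯 n : ℝ) : EReal) = ⨅ p : ProbabilityMeasure X × ProbabilityMeasure X, iterT 𝒯 n p.1 p.2 := by
  have μ₀ : ProbabilityMeasure X := Classical.arbitrary _
  have hub : (⨅ p : ProbabilityMeasure X × ProbabilityMeasure X, iterT 𝒯 n p.1 p.2)
      ≤ ((((n : ℝ) + 1) * M : ℝ) : EReal) :=
    (iInf_le _ (μ₀, μ₀)).trans (iter_le 𝒯 hM n μ₀ μ₀)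
  have hlb : ((((n : ℝ) + 1) * m : ℝ) : EReal)
      ≤ ⨅ p : ProbabilityMeasure X × ProbabilityMeasure X, iterT 𝒯 n p.1 p.2 :=
    le_iInf fun p => le_iter 𝒯 hm n p.1 p.2
  exact EReal.coe_toReal (fun h => (EReal.coe_lt_top _).not_ge (h ▸ hub))
    (fun h => (EReal.bot_lt_coe _).not_ge (h ▸ hlb))

lemma Ar_bounds (n : ℕ) : ((n : ℝ) + 1) * m ≤ Ar 𝒯 n ∧ Ar 𝒯 n ≤ ((n : ℝ) + 1) * M := by
  have μ₀ : ProbabilityMeasure X := Classical.arbitrary _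
  have hlb : ((((n : ℝ) + 1) * m : ℝ) : EReal)
      ≤ ⨅ p : ProbabilityMeasure X × ProbabilityMeasure X, iterT 𝒯 n p.1 p.2 :=
    le_iInf fun p => le_iter 𝒯 hm n p.1 p.2
  have hub : (⨅ p : ProbabilityMeasure X × ProbabilityMeasure X, iterT 𝒯 n p.1 p.2)
      ≤ ((((n : ℝ) + 1) * M : ℝ) : EReal) :=
    (iInf_le _ (μ₀, μ₀)).trans (iter_le 𝒯 hM n μ₀ μ₀)
  exact toReal_bounds hlb hub

lemma Ar_le_Fr (n : ℕ) (μ ν : ProbabilityMeasure X) : Ar 𝒯 n ≤ Fr 𝒯 n μ ν := by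
  have h : ((Ar 𝒯 n : ℝ) : EReal) ≤ ((Fr 𝒯 n μ ν : ℝ) : EReal) := by
    rw [Ar_coe 𝒯 hM hm n, Fr_coe 𝒯 hM hm n μ ν]
    exact iInf_le _ (μ, ν)
  exact_mod_cast h

omit [Nonempty (ProbabilityMeasure X)] in
lemma Fr_split (n k : ℕ) (μ ν σ : ProbabilityMeasure X) :
    Fr 𝒯 (n + k + 1) μ ν ≤ Fr 𝒯 n μ σ + Fr 𝒯 k σ ν := by
  have h := iter_split 𝒯 hM hm n k μ ν σ
  rw [← Fr_coe 𝒯 hM hm n μ σ, ← Fr_coe 𝒯 hM hm k σ ν, ← Fr_coe 𝒯 hM hm (n + k + 1) μ ν,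
    ← EReal.coe_add] at h
  exact_mod_cast h

lemma Ar_superadd (n k : ℕ) : Ar 𝒯 n + Ar 𝒯 k ≤ Ar 𝒯 (n + k + 1) := by
  have hE : (⨅ p : ProbabilityMeasure X × ProbabilityMeasure X, iterT 𝒯 n p.1 p.2)
      + (⨅ p : ProbabilityMeasure X × ProbabilityMeasure X, iterT 𝒯 k p.1 p.2)
      ≤ ⨅ p : ProbabilityMeasure X × ProbabilityMeasure X, iterT 𝒯 (n + k + 1) p.1 p.2 := by
    refine le_iInf fun p => ?_
    rw [iter_assoc 𝒯 hM hm]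
    exact le_iInf fun σ => add_le_add (iInf_le _ (p.1, σ)) (iInf_le _ (σ, p.2))
  rw [← Ar_coe 𝒯 hM hm n, ← Ar_coe 𝒯 hM hm k, ← Ar_coe 𝒯 hM hm (n + k + 1),
    ← EReal.coe_add] at hE
  exact_mod_cast hE

lemma Fr_osc2 (n : ℕ) (μ ν : ProbabilityMeasure X) : Fr 𝒯 (n + 2) μ ν ≤ Ar 𝒯 n + 2 * M := by
  have h1 : ∀ μ' ν' : ProbabilityMeasure X,
      iterT 𝒯 (n + 2) μ ν ≤ iterT 𝒯 n μ' ν' + ((2 * M : ℝ) : EReal) := by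
    intro μ' ν'
    have ha := iter_split 𝒯 hM hm 0 (n + 1) μ ν μ'
    have e : 0 + (n + 1) + 1 = n + 2 := by omega
    rw [e] at ha
    have hb := iter_split 𝒯 hM hm n 0 μ' ν ν'
    have e2 : n + 0 + 1 = n + 1 := by omega
    rw [e2] at hb
    refine ha.trans ?_
    refine (add_le_add (hM μ μ') (hb.trans (add_le_add le_rfl (hM ν' ν)))).trans (le_of_eq ?_)
    rw [← Fr_coe 𝒯 hM hm n μ' ν']
    norm_cast
    ring
  have h2 : iterT 𝒯 (n + 2) μ ν
      ≤ (⨅ p : ProbabilityMeasure X × ProbabilityMeasure X, iterT 𝒯 n p.1 p.2)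
        + ((2 * M : ℝ) : EReal) := by
    have h3 := le_iInf (fun p : ProbabilityMeasure X × ProbabilityMeasure X => h1 p.1 p.2)
    rwa [ereal_iInf_add] at h3
  rw [← Fr_coe 𝒯 hM hm (n + 2) μ ν, ← Ar_coe 𝒯 hM hm n, ← EReal.coe_add] at h2
  exact_mod_cast h2

lemma Fr_osc (n : ℕ) (μ ν : ProbabilityMeasure X) :
    Fr 𝒯 n μ ν ≤ Ar 𝒯 n + 2 * (M - m) := by
  match n with
  | 0 =>
    have h1 := (Fr_bounds 𝒯 hM hm 0 μ ν).2
    have h2 := (Ar_bounds 𝒯 hM hm 0).1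
    have hmM : m ≤ M := by
      have μ₀ : ProbabilityMeasure X := Classical.arbitrary _
      exact_mod_cast (hm μ₀ μ₀).trans (hM μ₀ μ₀)
    push_cast at h1 h2
    linarith
  | 1 =>
    have h2 := (Fr_bounds 𝒯 hM hm 1 μ ν).2
    have h3 := (Ar_bounds 𝒯 hM hm 1).1
    push_cast at h2 h3
    linarith
  | (k + 2) =>
    have h1 := Fr_osc2 𝒯 hM hm k μ ν
    have h2 := Ar_superadd 𝒯 hM hm k 1
    have e : k + 1 + 1 = k + 2 := by omega
    rw [e] at h2
    have h3 := (Ar_bounds 𝒯 hM hm 1).1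
    push_cast at h3
    linarith

lemma Ar_subadd (n k : ℕ) :
    Ar 𝒯 (n + k + 1) ≤ Ar 𝒯 n + Ar 𝒯 k + 2 * (2 * (M - m)) := by
  have μ₀ : ProbabilityMeasure X := Classical.arbitrary _
  have h1 := Ar_le_Fr 𝒯 hM hm (n + k + 1) μ₀ μ₀
  have h2 := Fr_split 𝒯 hM hm n k μ₀ μ₀ μ₀
  have h3 := Fr_osc 𝒯 hM hm n μ₀ μ₀
  have h4 := Fr_osc 𝒯 hM hm k μ₀ μ₀
  linarith



open Filter in
lemma Ar_claims {c : ℝ}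
    (hcA : Filter.Tendsto (fun n : ℕ => Ar 𝒯 n / ((n : ℝ) + 1)) Filter.atTop (nhds c)) (n : ℕ) :
    ((n : ℝ) + 1) * c - 2 * (2 * (M - m)) ≤ Ar 𝒯 n ∧ Ar 𝒯 n ≤ ((n : ℝ) + 1) * c := by
  set D : ℝ := 2 * (M - m) with hDdef
  have hmM : m ≤ M := by
    have μ₀ : ProbabilityMeasure X := Classical.arbitrary _
    exact_mod_cast (hm μ₀ μ₀).trans (hM μ₀ μ₀)
  have hD : 0 ≤ D := by rw [hDdef]; linarith
  set φ : ℕ → ℕ := fun j => (n + 1) * j + n with hφ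
  have hφ1 : ∀ j, φ (j + 1) = φ j + n + 1 := by
    intro j; simp only [hφ, Nat.mul_succ]; omega
  have hφtend : Tendsto φ atTop atTop :=
    tendsto_atTop_mono
      (fun j => le_trans (Nat.le_mul_of_pos_left j n.succ_pos) (Nat.le_add_right _ _))
      tendsto_id
  have hsubseq : Tendsto (fun j => Ar 𝒯 (φ j) / ((φ j : ℝ) + 1)) atTop (nhds c) :=
    hcA.comp hφtend
  have hd : ∀ j : ℕ, ((φ j : ℕ) : ℝ) + 1 = ((n : ℝ) + 1) * ((j : ℝ) + 1) := by
    intro j; simp only [hφ]; push_cast; ring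
  have hn1 : (0 : ℝ) < (n : ℝ) + 1 := by positivity
  constructor
  · -- lower bound, via subadditivity with constant
    have hshrink : ∀ j : ℕ, Ar 𝒯 (φ j) ≤ ((j : ℝ) + 1) * (Ar 𝒯 n + 2 * D) - 2 * D := by
      intro j
      induction j with
      | zero =>
        simp only [hφ, Nat.mul_zero, Nat.zero_add]
        push_cast
        linarith
      | succ j ih =>
        rw [hφ1 j]
        have h := Ar_subadd 𝒯 hM hm (φ j) n
        push_cast
        rw [hDdef] at ih ⊢
        linarith
    have hle : ∀ j : ℕ, Ar 𝒯 (φ j) / ((φ j : ℝ) + 1) ≤ (Ar 𝒯 n + 2 * D) / ((n : ℝ) + 1) := by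
      intro j
      have hj1 : (0 : ℝ) < (j : ℝ) + 1 := by positivity
      rw [hd j, div_le_div_iff₀ (by positivity) hn1]
      have h5 := mul_le_mul_of_nonneg_right (hshrink j) hn1.le
      have h6 : 0 ≤ 2 * D * ((n : ℝ) + 1) := by positivity
      nlinarith [h5, h6]
    have hfin := le_of_tendsto' hsubseq hle
    rw [le_div_iff₀ hn1] at hfin
    linarith
  · -- upper bound, via superadditivity
    have hgrow : ∀ j : ℕ, ((j : ℝ) + 1) * Ar 𝒯 n ≤ Ar 𝒯 (φ j) := by
      intro j
      induction j with
      | zero =>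
        simp only [hφ, Nat.mul_zero, Nat.zero_add]
        push_cast
        linarith
      | succ j ih =>
        rw [hφ1 j]
        have h := Ar_superadd 𝒯 hM hm (φ j) n
        push_cast
        linarith
    have hge : ∀ j : ℕ, Ar 𝒯 n / ((n : ℝ) + 1) ≤ Ar 𝒯 (φ j) / ((φ j : ℝ) + 1) := by
      intro j
      have hj1 : (0 : ℝ) < (j : ℝ) + 1 := by positivity
      rw [hd j, div_le_div_iff₀ hn1 (by positivity)]
      have h5 := mul_le_mul_of_nonneg_right (hgrow j) hn1.le
      nlinarith [h5]
    have hfin := ge_of_tendsto' hsubseq hge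
    rw [div_le_iff₀ hn1] at hfin
    linarith

open Filter in
lemma Fr_final {c : ℝ}
    (hcA : Filter.Tendsto (fun n : ℕ => Ar 𝒯 n / ((n : ℝ) + 1)) Filter.atTop (nhds c))
    (n : ℕ) (μ ν : ProbabilityMeasure X) :
    ((n : ℝ) + 1) * c - 2 * (2 * (M - m)) ≤ Fr 𝒯 n μ ν ∧
      Fr 𝒯 n μ ν ≤ ((n : ℝ) + 1) * c + 2 * (2 * (M - m)) := by
  have hcl := Ar_claims 𝒯 hM hm hcA n
  have h1 := Ar_le_Fr 𝒯 hM hm n μ ν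
  have h2 := Fr_osc 𝒯 hM hm n μ ν
  have hmM : m ≤ M := by
    have μ₀ : ProbabilityMeasure X := Classical.arbitrary _
    exact_mod_cast (hm μ₀ μ₀).trans (hM μ₀ μ₀)
  constructor
  · linarith [hcl.1]
  · linarith [hcl.2]

end Stmt10Aux

open Stmt10Aux in
lemma tendsto_aux (C : ℝ) :
    Filter.Tendsto (fun n : ℕ => C / ((n : ℝ) + 1)) Filter.atTop (nhds 0) := by
  have h := (tendsto_const_div_atTop_nhds_zero_nat C).comp (tendsto_add_atTop_nat 1)
  have e : (fun n : ℕ => C / ((n : ℝ) + 1)) = (fun n : ℕ => C / (n : ℝ)) ∘ (fun n => n + 1) := by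
    funext n
    simp only [Function.comp_apply]
    push_cast
    ring_nf
  rw [e]
  exact h

open Stmt10Aux

/-- Let `𝒯` be a backward linear transfer on `P(X) × P(X)` which is
bounded above (and below). Then `𝒯` has bounded oscillations: there is `K` with
`|𝒯_n(μ, ν) − n c(𝒯)| ≤ K` for all `μ, ν, n`; consequently `𝒯_n(μ, ν)/n → c(𝒯)` uniformly
on `P(X) × P(X)`, and for every `g ∈ C(X)`, `T^n g (x)/n → −c(𝒯)` uniformly in `x`. -/
theorem stmt10 {X : Type*} [MetricSpace X] [CompactSpace X] [MeasurableSpace X] [BorelSpace X]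
    (𝒯 : ProbabilityMeasure X → ProbabilityMeasure X → EReal)
    (hbddabove : ∃ M : ℝ, ∀ μ ν, 𝒯 μ ν ≤ (M : EReal))
    (hbdd : ∃ m : ℝ, ∀ μ ν, (m : EReal) ≤ 𝒯 μ ν)
    (hlsc : LowerSemicontinuous
      (fun p : ProbabilityMeasure X × ProbabilityMeasure X => 𝒯 p.1 p.2))
    (hconv : ∀ (μ₁ ν₁ μ₂ ν₂ μ ν : ProbabilityMeasure X) (t : ℝ), 0 ≤ t → t ≤ 1 →
      (μ : Measure X) =
        ENNReal.ofReal t • (μ₁ : Measure X) + ENNReal.ofReal (1 - t) • (μ₂ : Measure X) →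
      (ν : Measure X) =
        ENNReal.ofReal t • (ν₁ : Measure X) + ENNReal.ofReal (1 - t) • (ν₂ : Measure X) →
      𝒯 μ ν ≤ (t : EReal) * 𝒯 μ₁ ν₁ + ((1 - t : ℝ) : EReal) * 𝒯 μ₂ ν₂)
    (c : ℝ)
    (hc : Tendsto
      (fun n : ℕ =>
        (⨅ p : ProbabilityMeasure X × ProbabilityMeasure X,
          iterT 𝒯 n p.1 p.2).toReal / ((n : ℝ) + 1))
      atTop (nhds c)) :
    (∃ K : ℝ, ∀ (n : ℕ) (μ ν : ProbabilityMeasure X),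
      ((((n : ℝ) + 1) * c - K : ℝ) : EReal) ≤ iterT 𝒯 n μ ν ∧
      iterT 𝒯 n μ ν ≤ ((((n : ℝ) + 1) * c + K : ℝ) : EReal)) ∧
    TendstoUniformly
      (fun (n : ℕ) (p : ProbabilityMeasure X × ProbabilityMeasure X) =>
        (iterT 𝒯 n p.1 p.2).toReal / ((n : ℝ) + 1))
      (fun _ => c) atTop ∧
    ∀ g : C(X, ℝ),
      TendstoUniformly
        (fun (n : ℕ) (x : X) =>
          (⨆ σ : ProbabilityMeasure X,
            (((∫ y, g y ∂(σ : Measure X)) : ℝ) : EReal)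
              - iterT 𝒯 n (diracP x) σ).toReal / ((n : ℝ) + 1))
        (fun _ => -c) atTop := by
  clear hlsc hconv
  obtain ⟨M, hM⟩ := hbddabove
  obtain ⟨m, hm⟩ := hbdd
  rcases isEmpty_or_nonempty X with hX | hX
  · have hPe : IsEmpty (ProbabilityMeasure X) := by
      constructor
      intro μ
      have h := μ.2.measure_univ
      rw [Set.univ_eq_empty_iff.mpr hX] at h
      simp at h
    refine ⟨⟨0, fun n μ ν => isEmptyElim μ⟩, ?_, ?_⟩
    · rw [Metric.tendstoUniformly_iff]
      intro ε hε
      filter_upwards with n p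
      exact isEmptyElim p.1
    · intro g
      rw [Metric.tendstoUniformly_iff]
      intro ε hε
      filter_upwards with n x
      exact isEmptyElim x
  · have hPne : Nonempty (ProbabilityMeasure X) := ⟨diracP (Classical.arbitrary X)⟩
    have μ₀ : ProbabilityMeasure X := Classical.arbitrary _
    have hmM : m ≤ M := by exact_mod_cast (hm μ₀ μ₀).trans (hM μ₀ μ₀)
    have hcA : Tendsto (fun n : ℕ => Ar 𝒯 n / ((n : ℝ) + 1)) atTop (nhds c) := hc
    set D : ℝ := 2 * (M - m) with hDdef
    have hD : 0 ≤ D := by rw [hDdef]; linarith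
    have hFb := Fr_final 𝒯 hM hm hcA
    refine ⟨⟨2 * D, fun n μ ν => ?_⟩, ?_, ?_⟩
    · constructor
      · rw [← Fr_coe 𝒯 hM hm n μ ν]
        exact_mod_cast (hFb n μ ν).1
      · rw [← Fr_coe 𝒯 hM hm n μ ν]
        exact_mod_cast (hFb n μ ν).2
    · rw [Metric.tendstoUniformly_iff]
      intro ε hε
      filter_upwards [(tendsto_aux (2 * D)).eventually (gt_mem_nhds hε)] with n hn p
      rw [Real.dist_eq]
      have hb := hFb n p.1 p.2
      have hn1 : (0 : ℝ) < (n : ℝ) + 1 := by positivity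
      have habs : |c * ((n : ℝ) + 1) - Fr 𝒯 n p.1 p.2| ≤ 2 * D := by
        rw [abs_le]
        constructor
        · linarith [hb.2]
        · linarith [hb.1]
      have e : c - Fr 𝒯 n p.1 p.2 / ((n : ℝ) + 1)
          = (c * ((n : ℝ) + 1) - Fr 𝒯 n p.1 p.2) / ((n : ℝ) + 1) := by
        field_simp
      have egoal : (iterT 𝒯 n p.1 p.2).toReal = Fr 𝒯 n p.1 p.2 := rfl
      rw [egoal, e, abs_div, abs_of_pos hn1]
      have hq : |c * ((n : ℝ) + 1) - Fr 𝒯 n p.1 p.2| / ((n : ℝ) + 1) ≤ 2 * D / ((n : ℝ) + 1) := by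
        gcongr
      exact lt_of_le_of_lt hq hn
    · intro g
      rw [Metric.tendstoUniformly_iff]
      intro ε hε
      have hgb : ∀ σ : ProbabilityMeasure X, |∫ y, g y ∂(σ : Measure X)| ≤ ‖g‖ := by
        intro σ
        have h := norm_integral_le_of_norm_le_const (μ := (σ : Measure X))
          (f := fun y => g y) (C := ‖g‖)
          (Filter.Eventually.of_forall fun y => g.norm_coe_le_norm y)
        simpa [Real.norm_eq_abs] using h
      have hSb : ∀ (n : ℕ) (x : X),
          -‖g‖ - (((n : ℝ) + 1) * c + 2 * D)
            ≤ (⨆ σ : ProbabilityMeasure X,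
                (((∫ y, g y ∂(σ : Measure X)) : ℝ) : EReal) - iterT 𝒯 n (diracP x) σ).toReal
          ∧ (⨆ σ : ProbabilityMeasure X,
                (((∫ y, g y ∂(σ : Measure X)) : ℝ) : EReal) - iterT 𝒯 n (diracP x) σ).toReal
            ≤ ‖g‖ - (((n : ℝ) + 1) * c - 2 * D) := by
        intro n x
        have hub : (⨆ σ : ProbabilityMeasure X,
            (((∫ y, g y ∂(σ : Measure X)) : ℝ) : EReal) - iterT 𝒯 n (diracP x) σ)
            ≤ ((‖g‖ - (((n : ℝ) + 1) * c - 2 * D) : ℝ) : EReal) := by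
          refine iSup_le fun σ => ?_
          rw [← Fr_coe 𝒯 hM hm n (diracP x) σ, ← EReal.coe_sub]
          have h1 := (hFb n (diracP x) σ).1
          have h2 := abs_le.mp (hgb σ)
          have h3 : (∫ y, g y ∂(σ : Measure X)) - Fr 𝒯 n (diracP x) σ
              ≤ ‖g‖ - (((n : ℝ) + 1) * c - 2 * D) := by linarith [h2.2]
          exact_mod_cast h3
        have hlb : ((-‖g‖ - (((n : ℝ) + 1) * c + 2 * D) : ℝ) : EReal)
            ≤ ⨆ σ : ProbabilityMeasure X,
                (((∫ y, g y ∂(σ : Measure X)) : ℝ) : EReal) - iterT 𝒯 n (diracP x) σ := by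
          refine le_trans ?_ (le_iSup _ μ₀)
          rw [← Fr_coe 𝒯 hM hm n (diracP x) μ₀, ← EReal.coe_sub]
          have h1 := (hFb n (diracP x) μ₀).2
          have h2 := abs_le.mp (hgb μ₀)
          have h3 : -‖g‖ - (((n : ℝ) + 1) * c + 2 * D)
              ≤ (∫ y, g y ∂(μ₀ : Measure X)) - Fr 𝒯 n (diracP x) μ₀ := by linarith [h2.1]
          exact_mod_cast h3
        exact toReal_bounds hlb hub
      filter_upwards [(tendsto_aux (‖g‖ + 2 * D)).eventually (gt_mem_nhds hε)] with n hn x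
      rw [Real.dist_eq]
      set S := (⨆ σ : ProbabilityMeasure X,
        (((∫ y, g y ∂(σ : Measure X)) : ℝ) : EReal) - iterT 𝒯 n (diracP x) σ).toReal with hSdef
      have hb := hSb n x
      rw [← hSdef] at hb
      have hn1 : (0 : ℝ) < (n : ℝ) + 1 := by positivity
      have habs : |(-c) * ((n : ℝ) + 1) - S| ≤ ‖g‖ + 2 * D := by
        rw [abs_le]
        constructor
        · linarith [hb.2]
        · linarith [hb.1]
      have e : (-c) - S / ((n : ℝ) + 1) = ((-c) * ((n : ℝ) + 1) - S) / ((n : ℝ) + 1) := by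
        field_simp
      rw [e, abs_div, abs_of_pos hn1]
      have hq : |(-c) * ((n : ℝ) + 1) - S| / ((n : ℝ) + 1) ≤ (‖g‖ + 2 * D) / ((n : ℝ) + 1) := by
        gcongr
      exact lt_of_le_of_lt hq hn
end

section
/- Let X be a compact metric space, σ : X → X continuous and surjective, A : X → ℝ continuous, and suppose the transfer 𝒯(μ, ν) = ∫ A dμ if ν = σ_# μ (+∞ otherwise) has bounded oscillations. Then there exists a bounded-above function h in USC_σ(X) such that h(σ(x)) − A(x) + c(𝒯) = h(x) for all x ∈ X, where c(𝒯) = inf{∫ A dμ : σ_# μ = μ}. -/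
open MeasureTheory Filter Topology
open scoped ENNReal Classical

lemma ereal_iInf_add_coe {ι : Type*} [Nonempty ι] (f : ι → EReal) (d : ℝ) :
    (⨅ i, (f i + (d : EReal))) = (⨅ i, f i) + (d : EReal) := by
  refine le_antisymm ?_ (le_iInf fun i => add_le_add_left (iInf_le _ i) _)
  have h1 : (⨅ i, (f i + (d : EReal))) - (d : EReal) ≤ ⨅ i, f i :=
    le_iInf fun i => by
      have := EReal.sub_le_sub (iInf_le (fun j => f j + (d : EReal)) i) (le_refl (d : EReal))
      simpa [EReal.add_sub_cancel_right] using this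
  calc (⨅ i, (f i + (d : EReal)))
      = ((⨅ i, (f i + (d : EReal))) - (d : EReal)) + (d : EReal) :=
        EReal.sub_add_cancel.symm
    _ ≤ (⨅ i, f i) + (d : EReal) := add_le_add_left h1 _

lemma ereal_iSup_add_coe {ι : Type*} [Nonempty ι] (f : ι → EReal) (d : ℝ) :
    (⨆ i, (f i + (d : EReal))) = (⨆ i, f i) + (d : EReal) := by
  refine le_antisymm (iSup_le fun i => add_le_add_left (le_iSup _ i) _) ?_
  have h1 : (⨆ i, f i) ≤ (⨆ i, (f i + (d : EReal))) - (d : EReal) :=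
    iSup_le fun i => by
      have := EReal.sub_le_sub (le_iSup (fun j => f j + (d : EReal)) i) (le_refl (d : EReal))
      simpa [EReal.add_sub_cancel_right] using this
  calc (⨆ i, f i) + (d : EReal)
      ≤ ((⨆ i, (f i + (d : EReal))) - (d : EReal)) + (d : EReal) := add_le_add_left h1 _
    _ = _ := EReal.sub_add_cancel

lemma iterT_eq {X : Type*} [MetricSpace X] [CompactSpace X] [Nonempty X]
    [MeasurableSpace X] [BorelSpace X]
    (σ : X → X) (hσc : Continuous σ) (A : C(X, ℝ))
    (𝒯 : ProbabilityMeasure X → ProbabilityMeasure X → EReal)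
    (h𝒯 : ∀ μ ν : ProbabilityMeasure X,
      𝒯 μ ν = if (μ : Measure X).map σ = (ν : Measure X)
        then (((∫ x, A x ∂(μ : Measure X)) : ℝ) : EReal) else ⊤) :
    ∀ (n : ℕ) (μ ν : ProbabilityMeasure X),
      iterT 𝒯 n μ ν = if (μ : Measure X).map (σ^[n+1]) = (ν : Measure X)
        then ((∑ k ∈ Finset.range (n+1),
            ∫ x, A (σ^[k] x) ∂(μ : Measure X) : ℝ) : EReal)
        else ⊤ := by
  have hσm : Measurable σ := hσc.measurable
  intro n
  induction n with
  | zero =>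
    intro μ ν
    simpa [iterT, Function.iterate_one] using h𝒯 μ ν
  | succ n ih =>
    intro μ ν
    set p : ProbabilityMeasure X :=
      ⟨(μ : Measure X).map σ, Measure.isProbabilityMeasure_map hσm.aemeasurable⟩ with hp
    have hFtop : ∀ σ' : ProbabilityMeasure X, σ' ≠ p →
        𝒯 μ σ' + iterT 𝒯 n σ' ν = ⊤ := by
      intro σ' hne
      have h1 : ¬ ((μ : Measure X).map σ = (σ' : Measure X)) := by
        intro hEq
        exact hne (Subtype.ext hEq.symm)
      rw [h𝒯, if_neg h1, ih σ' ν]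
      split
      · exact EReal.top_add_coe _
      · exact EReal.top_add_top
    have hiInf : iterT 𝒯 (n+1) μ ν = 𝒯 μ p + iterT 𝒯 n p ν := by
      show (⨅ σ' : ProbabilityMeasure X, 𝒯 μ σ' + iterT 𝒯 n σ' ν) = _
      refine le_antisymm (iInf_le _ p) (le_iInf fun σ' => ?_)
      by_cases hσ' : σ' = p
      · rw [hσ']
      · rw [hFtop σ' hσ']; exact le_top
    have hTp : 𝒯 μ p = (((∫ x, A x ∂(μ : Measure X)) : ℝ) : EReal) := by
      rw [h𝒯]; exact if_pos rfl
    have hmap2 : (p : Measure X).map (σ^[n+1]) = (μ : Measure X).map (σ^[n+1+1]) := by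
      show ((μ : Measure X).map σ).map (σ^[n+1]) = _
      rw [Measure.map_map (hσm.iterate (n+1)) hσm, ← Function.iterate_succ]
    have hint : ∀ k : ℕ,
        ∫ x, A (σ^[k] x) ∂(p : Measure X) = ∫ x, A (σ^[k+1] x) ∂(μ : Measure X) := by
      intro k
      show ∫ x, A (σ^[k] x) ∂((μ : Measure X).map σ) = _
      have h2 := integral_map (μ := (μ : Measure X)) hσm.aemeasurable
        (f := fun x => A (σ^[k] x))
        ((A.continuous.comp (hσc.iterate k)).aestronglyMeasurable)
      rw [h2]
      exact integral_congr_ae (.of_forall fun x => by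
        simp only [Function.iterate_succ_apply])
    rw [hiInf, hTp, ih p ν, hmap2]
    by_cases hcond : (μ : Measure X).map (σ^[n+1+1]) = (ν : Measure X)
    · rw [if_pos hcond, if_pos hcond, ← EReal.coe_add]
      congr 1
      have : ∀ k ∈ Finset.range (n+1),
          ∫ x, A (σ^[k] x) ∂(p : Measure X) = ∫ x, A (σ^[k+1] x) ∂(μ : Measure X) :=
        fun k _ => hint k
      rw [Finset.sum_congr rfl this]
      rw [Finset.sum_range_succ' (fun k => ∫ x, A (σ^[k] x) ∂(μ : Measure X)) (n+1)]
      simp [add_comm]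
    · rw [if_neg hcond, if_neg hcond]
      exact EReal.coe_add_top _

/-- Let `X` be compact metric, `σ : X → X` continuous surjective,
`A : X → ℝ` continuous, and suppose the transfer `𝒯(μ, ν) = ∫ A dμ` if `ν = σ_# μ`
(`+∞` otherwise) has bounded oscillations. Then there exists a bounded-above function
`h ∈ USC_σ(X)` (a proper increasing limit of upper semi-continuous functions) such that
`h(σ(x)) − A(x) + c(𝒯) = h(x)` for all `x`, where `c(𝒯) = inf { ∫ A dμ : σ_# μ = μ }`. -/
theorem stmt19 {X : Type*} [MetricSpace X] [CompactSpace X] [Nonempty X]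
    [MeasurableSpace X] [BorelSpace X]
    (σ : X → X) (hσc : Continuous σ) (hσs : Function.Surjective σ)
    (A : C(X, ℝ))
    (𝒯 : ProbabilityMeasure X → ProbabilityMeasure X → EReal)
    (h𝒯 : ∀ μ ν : ProbabilityMeasure X,
      𝒯 μ ν = if (μ : Measure X).map σ = (ν : Measure X)
        then (((∫ x, A x ∂(μ : Measure X)) : ℝ) : EReal) else ⊤)
    (c : ℝ)
    (hc : (c : EReal) =
      ⨅ μ : {μ : ProbabilityMeasure X // (μ : Measure X).map σ = (μ : Measure X)},
        (((∫ x, A x ∂((μ : ProbabilityMeasure X) : Measure X)) : ℝ) : EReal))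
    (hosc : ∃ K : ℝ, ∀ n : ℕ,
      (((((n : ℝ) + 1) * c - K : ℝ)) : EReal) ≤
        ⨅ p : ProbabilityMeasure X × ProbabilityMeasure X, iterT 𝒯 n p.1 p.2) :
    ∃ h : X → EReal,
      (∃ M : ℝ, ∀ x, h x ≤ (M : EReal)) ∧
      (∃ x, ⊥ < h x) ∧
      (∃ u : ℕ → X → EReal, (∀ n, UpperSemicontinuous (u n)) ∧
        (∀ n x, u n x ≤ u (n + 1) x) ∧ (∀ x, h x = ⨆ n : ℕ, u n x)) ∧
      (∀ x, h (σ x) - ((A x : ℝ) : EReal) + (c : EReal) = h x) := by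
  classical
  obtain ⟨K, hK⟩ := hosc
  have hσm : Measurable σ := hσc.measurable
  set S : ℕ → X → ℝ := fun n x => ∑ k ∈ Finset.range n, A (σ^[k] x) with hS
  have hScont : ∀ n, Continuous (S n) := fun n =>
    continuous_finset_sum _ fun k _ => A.continuous.comp (hσc.iterate k)
  set K₀ : ℝ := max K 0 with hK₀
  -- Birkhoff sums bounded below
  have hSlowK : ∀ (m : ℕ) (x : X), ((m : ℝ) + 1) * c - K ≤ S (m+1) x := by
    intro m x
    set δx : ProbabilityMeasure X := ⟨Measure.dirac x, inferInstance⟩ with hδx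
    have hmeas : Measurable (σ^[m+1]) := hσm.iterate (m+1)
    set ν : ProbabilityMeasure X :=
      ⟨(Measure.dirac x).map (σ^[m+1]), Measure.isProbabilityMeasure_map hmeas.aemeasurable⟩ with hν
    have hval : iterT 𝒯 m δx ν = ((S (m+1) x : ℝ) : EReal) := by
      rw [iterT_eq σ hσc A 𝒯 h𝒯 m δx ν]
      rw [if_pos (show (δx : Measure X).map (σ^[m+1]) = (ν : Measure X) from rfl)]
      norm_cast
      exact Finset.sum_congr rfl fun k _ => integral_dirac _ x
    have hle := le_trans (hK m)
      (le_trans (iInf_le _ (δx, ν)) (le_of_eq hval))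
    exact_mod_cast hle
  have hSlow : ∀ (n : ℕ) (x : X), (n : ℝ) * c - K₀ ≤ S n x := by
    intro n x
    cases n with
    | zero => simp [hS, hK₀]
    | succ m =>
      have h1 := hSlowK m x
      have h2 : K ≤ K₀ := le_max_left _ _
      push_cast
      push_cast at h1
      linarith
  -- integrability of continuous functions
  have hIntegrable : ∀ (f : X → ℝ), Continuous f → ∀ (μ : Measure X) [IsProbabilityMeasure μ],
      Integrable f μ := by
    intro f hf μ _
    exact hf.integrable_of_hasCompactSupport (HasCompactSupport.of_compactSpace f)
  -- points with small Birkhoff sums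
  have hinv : ∀ n : ℕ, ∃ x : X, S (n+1) x ≤ ((n : ℝ) + 1) * c + 1 := by
    intro n
    have hpos : (0 : ℝ) < 1 / ((n : ℝ) + 1) := by positivity
    have h1 : (c : EReal) < ((c + 1 / ((n : ℝ) + 1) : ℝ) : EReal) := by
      exact_mod_cast (by linarith : c < c + 1 / ((n : ℝ) + 1))
    rw [hc] at h1
    obtain ⟨⟨μ, hμinv⟩, hμlt⟩ := iInf_lt_iff.mp h1
    have hμlt' : ∫ x, A x ∂(μ : Measure X) < c + 1 / ((n : ℝ) + 1) := by
      exact_mod_cast hμlt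
    have hiter : ∀ k : ℕ, (μ : Measure X).map (σ^[k]) = (μ : Measure X) := by
      intro k
      induction k with
      | zero => simp
      | succ k ihk =>
        rw [Function.iterate_succ, ← Measure.map_map (hσm.iterate k) hσm, hμinv, ihk]
    have hint : ∀ k : ℕ,
        ∫ x, A (σ^[k] x) ∂(μ : Measure X) = ∫ x, A x ∂(μ : Measure X) := by
      intro k
      have h2 := integral_map (μ := (μ : Measure X)) (hσm.iterate k).aemeasurable
        (f := fun x => A x) (A.continuous.aestronglyMeasurable)
      rw [hiter k] at h2
      exact h2.symm
    have hintS : ∫ x, S (n+1) x ∂(μ : Measure X)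
        = ((n : ℝ) + 1) * ∫ x, A x ∂(μ : Measure X) := by
      have h3 : ∫ x, S (n+1) x ∂(μ : Measure X)
          = ∑ k ∈ Finset.range (n+1), ∫ x, A (σ^[k] x) ∂(μ : Measure X) := by
        simp only [hS]
        exact integral_finset_sum _ (fun k _ =>
          hIntegrable _ (A.continuous.comp (hσc.iterate k)) (μ : Measure X))
      rw [h3, Finset.sum_congr rfl fun k _ => hint k,
        Finset.sum_const, Finset.card_range, nsmul_eq_mul]
      push_cast
      ring
    by_contra hcon
    push_neg at hcon
    obtain ⟨x₀, -, hx₀⟩ := isCompact_univ.exists_isMinOn Set.univ_nonempty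
      (hScont (n+1)).continuousOn
    have hmin : ∀ y, S (n+1) x₀ ≤ S (n+1) y := fun y => hx₀ (Set.mem_univ y)
    have hIle : S (n+1) x₀ ≤ ∫ x, S (n+1) x ∂(μ : Measure X) := by
      have := integral_mono (μ := (μ : Measure X))
        (integrable_const (S (n+1) x₀))
        (hIntegrable _ (hScont (n+1)) (μ : Measure X)) hmin
      simpa using this
    have hstrict : ∫ x, S (n+1) x ∂(μ : Measure X) < ((n : ℝ) + 1) * c + 1 := by
      rw [hintS]
      have hn1 : (0 : ℝ) < (n : ℝ) + 1 := by positivity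
      have := mul_lt_mul_of_pos_left hμlt' hn1
      have heq : ((n : ℝ) + 1) * (c + 1 / ((n : ℝ) + 1)) = ((n : ℝ) + 1) * c + 1 := by
        field_simp
      linarith [this, heq.le]
    exact absurd (lt_of_lt_of_le (hcon x₀) (le_trans hIle hstrict.le)) (lt_irrefl _)
  -- sum splitting
  have hSadd : ∀ (a b : ℕ) (x : X), S (a + b) x = S a x + S b (σ^[a] x) := by
    intro a b x
    rw [hS]
    simp only
    rw [Finset.sum_range_add]
    congr 1
    refine Finset.sum_congr rfl fun j _ => ?_
    rw [add_comm a j, Function.iterate_add_apply]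
  -- existence of a point with all Birkhoff sums controlled
  have hstar : ∃ x : X, ∀ k : ℕ, S k x ≤ (k : ℝ) * c + (1 + K₀) := by
    choose xs hxs using hinv
    have key : ∀ (n k : ℕ), k ≤ n + 1 → S k (xs n) ≤ (k : ℝ) * c + (1 + K₀) := by
      intro n k hk
      have hsplit : S (n+1) (xs n) = S k (xs n) + S (n+1-k) (σ^[k] (xs n)) := by
        rw [← hSadd k (n+1-k) (xs n), Nat.add_sub_cancel' hk]
      have hlow := hSlow (n+1-k) (σ^[k] (xs n))
      have hcast : ((n+1-k : ℕ) : ℝ) = ((n : ℝ) + 1) - (k : ℝ) := by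
        push_cast [Nat.cast_sub hk]
        ring
      rw [hcast] at hlow
      have hup := hxs n
      rw [hsplit] at hup
      linarith
    obtain ⟨xstar, φ, hφmono, hφtend⟩ := CompactSpace.tendsto_subseq xs
    refine ⟨xstar, fun k => ?_⟩
    have htend : Tendsto (fun j => S k (xs (φ j))) atTop (𝓝 (S k xstar)) :=
      ((hScont k).tendsto xstar).comp hφtend
    refine le_of_tendsto htend ?_
    filter_upwards [eventually_ge_atTop k] with j hj
    exact key (φ j) k (by have h5 : j ≤ φ j := hφmono.le_apply; omega)
  obtain ⟨xstar, hxstar⟩ := hstar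
  -- the candidate functions
  set g : ℕ → X → EReal := fun n x => (((n : ℝ) * c - S n x : ℝ) : EReal) with hg
  set u : ℕ → X → EReal := fun N x => ⨅ n : ℕ, g (N + n) x with hu
  set h : X → EReal := fun x => ⨆ N : ℕ, u N x with hh
  have hgle : ∀ (n : ℕ) (x : X), g n x ≤ (K₀ : EReal) := by
    intro n x
    simp only [hg]
    have := hSlow n x
    exact_mod_cast (by linarith : (n : ℝ) * c - S n x ≤ K₀)
  refine ⟨h, ⟨K₀, ?_⟩, ⟨xstar, ?_⟩, ⟨u, ?_, ?_, fun x => rfl⟩, ?_⟩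
  · -- bounded above
    intro x
    refine iSup_le fun N => le_trans (iInf_le _ 0) (hgle (N + 0) x)
  · -- proper at xstar
    have hlb : ∀ m : ℕ, ((-(1 + K₀) : ℝ) : EReal) ≤ g m xstar := by
      intro m
      simp only [hg]
      have := hxstar m
      exact_mod_cast (by linarith : -(1 + K₀) ≤ (m : ℝ) * c - S m xstar)
    calc (⊥ : EReal) < ((-(1 + K₀) : ℝ) : EReal) := EReal.bot_lt_coe _
      _ ≤ u 0 xstar := le_iInf fun n => hlb (0 + n)
      _ ≤ h xstar := le_iSup (fun N => u N xstar) 0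
  · -- upper semicontinuity
    intro N
    refine upperSemicontinuous_iInf fun n => ?_
    have hcont : Continuous (g (N + n)) := by
      simp only [hg]
      exact continuous_coe_real_ereal.comp (continuous_const.sub (hScont (N + n)))
    exact hcont.upperSemicontinuous
  · -- monotone
    intro N x
    refine le_iInf fun n => iInf_le_of_le (n + 1) (le_of_eq ?_)
    rw [show N + (n + 1) = N + 1 + n by ring]
  · -- the weak KAM equation
    intro x
    have hgshift : ∀ m : ℕ, g m (σ x) = g (m+1) x + ((A x - c : ℝ) : EReal) := by
      intro m
      rw [hg]
      simp only [← EReal.coe_add, EReal.coe_eq_coe_iff]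
      have hs : S (m+1) x = A x + S m (σ x) := by
        have h1 := hSadd 1 m x
        rw [show (1 : ℕ) + m = m + 1 by ring] at h1
        rw [h1]
        simp [hS]
      rw [hs]
      push_cast
      ring
    have hkey : h (σ x) = h x + ((A x - c : ℝ) : EReal) := by
      have e1 : ∀ N : ℕ, (⨅ n : ℕ, g (N + n) (σ x)) = u (N + 1) x + ((A x - c : ℝ) : EReal) := by
        intro N
        calc (⨅ n : ℕ, g (N + n) (σ x))
            = ⨅ n : ℕ, (g (N + 1 + n) x + ((A x - c : ℝ) : EReal)) := by
              refine iInf_congr fun n => ?_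
              rw [hgshift (N + n), show N + n + 1 = N + 1 + n by ring]
          _ = (⨅ n : ℕ, g (N + 1 + n) x) + ((A x - c : ℝ) : EReal) :=
              ereal_iInf_add_coe _ _
      calc h (σ x) = ⨆ N : ℕ, (⨅ n : ℕ, g (N + n) (σ x)) := rfl
        _ = ⨆ N : ℕ, (u (N + 1) x + ((A x - c : ℝ) : EReal)) := iSup_congr e1
        _ = (⨆ N : ℕ, u (N + 1) x) + ((A x - c : ℝ) : EReal) := ereal_iSup_add_coe _ _
        _ = h x + ((A x - c : ℝ) : EReal) := by
            congr 1
            refine le_antisymm (iSup_le fun N => le_iSup (fun N => u N x) (N + 1)) ?_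
            refine iSup_le fun N => ?_
            refine le_trans ?_ (le_iSup (fun N => u (N + 1) x) N)
            refine le_iInf fun n => iInf_le_of_le (n + 1) (le_of_eq ?_)
            rw [show N + (n + 1) = N + 1 + n by ring]
    rw [hkey]
    generalize h x = z
    induction z with
    | bot => simp [EReal.bot_add, EReal.bot_sub]
    | coe r =>
      rw [← EReal.coe_add, ← EReal.coe_sub, ← EReal.coe_add, EReal.coe_eq_coe_iff]
      ring
    | top => rw [EReal.top_add_coe, EReal.top_sub_coe, EReal.top_add_coe]
end
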